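/- arXiv:2309.01208 — 2 statements merged into one kernel-verified Lean document; each statement's English description precedes it below -/
import Mathlib

section
/- Let n be a positive multiple of 5 and let m ≥ n. The number of ordered pairs (x, y) of strictly increasing sequences in {1, …, m}^n for which there exists a set S ⊆ {1, …, n} with |S| = n/5 and x|_S = y|_S is at most (5e · (n/m) · (5e/4)^4)^{n/5} · C(m, n)^2, where e is Euler's number and C(m, n) is the binomial coefficient m choose n. -/
open Finset

private lemma aux_pow_fact (n d : ℕ) : ∀ k, k ≤ n →
    (n + d) ^ k * Nat.factorial k ≤ n ^ k * (d + k).descFactorial k := by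
  intro k
  induction k with
  | zero => simp
  | succ k ih =>
    intro hk
    have ihk := ih (Nat.le_of_succ_le hk)
    have hfac : (n + d) * (k + 1) ≤ n * (d + k + 1) := by nlinarith [hk]
    calc (n + d) ^ (k + 1) * Nat.factorial (k + 1)
        = ((n + d) * (k + 1)) * ((n + d) ^ k * Nat.factorial k) := by
          rw [Nat.factorial_succ, pow_succ]; ring
      _ ≤ (n * (d + k + 1)) * (n ^ k * (d + k).descFactorial k) :=
          Nat.mul_le_mul hfac ihk
      _ = n ^ (k + 1) * ((d + k + 1) * (d + k).descFactorial k) := by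
          rw [pow_succ]; ring
      _ = n ^ (k + 1) * (d + k + 1).descFactorial (k + 1) := by
          rw [Nat.succ_descFactorial_succ]

private lemma aux_id (n d : ℕ) : ∀ k, k ≤ n →
    (n + d).choose n * n.descFactorial k
      = (n + d).choose (n - k) * (d + k).descFactorial k := by
  intro k
  induction k with
  | zero => simp
  | succ k ih =>
    intro hk
    have ihk := ih (Nat.le_of_succ_le hk)
    obtain ⟨j, hj⟩ : ∃ j, n - k = j + 1 := ⟨n - k - 1, by omega⟩
    have h1 : (n + d).choose (j + 1) * (j + 1) = (n + d).choose j * ((n + d) - j) :=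
      Nat.choose_succ_right_eq _ _
    have h2 : (n + d) - j = d + k + 1 := by omega
    have h3 : n - (k + 1) = j := by omega
    calc (n + d).choose n * n.descFactorial (k + 1)
        = (n - k) * ((n + d).choose n * n.descFactorial k) := by
          rw [Nat.descFactorial_succ]; ring
      _ = (n - k) * ((n + d).choose (n - k) * (d + k).descFactorial k) := by rw [ihk]
      _ = ((n + d).choose (j + 1) * (j + 1)) * (d + k).descFactorial k := by
          rw [hj]; ring
      _ = ((n + d).choose j * (d + k + 1)) * (d + k).descFactorial k := by rw [h1, h2]
      _ = (n + d).choose (n - (k + 1)) * (d + k + 1).descFactorial (k + 1) := by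
          rw [h3, Nat.succ_descFactorial_succ]; ring

private lemma aux_choose_le_two_pow (n k : ℕ) : n.choose k ≤ 2 ^ n := by
  rcases le_or_gt n k with h | h
  · rcases eq_or_lt_of_le h with rfl | h
    · calc n.choose n = 1 := Nat.choose_self n
        _ ≤ 2 ^ n := Nat.one_le_two_pow
    · simp [Nat.choose_eq_zero_of_lt h]
  · calc n.choose k ≤ ∑ i ∈ Finset.range (n + 1), n.choose i :=
        Finset.single_le_sum (fun i _ => Nat.zero_le _)
          (Finset.mem_range.2 (Nat.lt_succ_of_le h.le))
    _ = 2 ^ n := Nat.sum_range_choose n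

/-- Union-bound estimate in the proof of Claim 3.3: for `5 ∣ n`, `n ≤ m`, the
number of ordered pairs `(x, y)` of strictly increasing sequences in
`{1,…,m}^n` that agree on some index set `S` of size `n/5` is at most
`(5e · (n/m) · (5e/4)^4)^{n/5} · C(m,n)^2`. -/
theorem stmt4 (n m : ℕ) (hn : 0 < n) (h5 : 5 ∣ n) (hm : n ≤ m) :
    (Set.ncard {xy : (Fin n → ℕ) × (Fin n → ℕ) |
        (StrictMono xy.1 ∧ ∀ i, 1 ≤ xy.1 i ∧ xy.1 i ≤ m) ∧
        (StrictMono xy.2 ∧ ∀ i, 1 ≤ xy.2 i ∧ xy.2 i ≤ m) ∧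
        ∃ S : Finset (Fin n), S.card = n / 5 ∧ ∀ i ∈ S, xy.1 i = xy.2 i} : ℝ) ≤
      (5 * Real.exp 1 * ((n : ℝ) / (m : ℝ)) * (5 * Real.exp 1 / 4) ^ 4) ^ (n / 5) *
        (Nat.choose m n : ℝ) ^ 2 := by
  classical
  obtain ⟨k, hk⟩ := h5
  have hk5 : n / 5 = k := by omega
  have hkn : k ≤ n := by omega
  have hm0 : 0 < m := lt_of_lt_of_le hn hm
  rw [hk5]
  set A := {xy : (Fin n → ℕ) × (Fin n → ℕ) |
    (StrictMono xy.1 ∧ ∀ i, 1 ≤ xy.1 i ∧ xy.1 i ≤ m) ∧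
    (StrictMono xy.2 ∧ ∀ i, 1 ≤ xy.2 i ∧ xy.2 i ≤ m) ∧
    ∃ S : Finset (Fin n), S.card = k ∧ ∀ i ∈ S, xy.1 i = xy.2 i} with hA
  -- selection of a witness set
  let Sel : ((Fin n → ℕ) × (Fin n → ℕ)) → Finset (Fin n) := fun xy =>
    if h : ∃ S : Finset (Fin n), S.card = k ∧ ∀ i ∈ S, xy.1 i = xy.2 i
    then h.choose else ∅
  have hSel : ∀ xy : (Fin n → ℕ) × (Fin n → ℕ),
      (∃ S : Finset (Fin n), S.card = k ∧ ∀ i ∈ S, xy.1 i = xy.2 i) →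
      (Sel xy).card = k ∧ ∀ i ∈ Sel xy, xy.1 i = xy.2 i := by
    intro xy h
    simp only [Sel, dif_pos h]
    exact h.choose_spec
  let F : ((Fin n → ℕ) × (Fin n → ℕ)) → (Finset (Fin n) × Finset ℕ × Finset ℕ) :=
    fun xy => (Sel xy, Finset.image xy.1 Finset.univ,
      Finset.image xy.2 Finset.univ \ Finset.image xy.1 (Sel xy))
  have hrange : ∀ f : Fin n → ℕ, StrictMono f → (∀ i, 1 ≤ f i ∧ f i ≤ m) →
      Finset.image f Finset.univ ∈ (Finset.Icc 1 m).powersetCard n := by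
    intro f hf hb
    rw [Finset.mem_powersetCard]
    constructor
    · intro v hv
      rw [Finset.mem_image] at hv
      obtain ⟨i, _, rfl⟩ := hv
      exact Finset.mem_Icc.2 (hb i)
    · rw [Finset.card_image_of_injective _ hf.injective, Finset.card_univ, Fintype.card_fin]
  have hEqOfImage : ∀ f g : Fin n → ℕ, StrictMono f → StrictMono g →
      Finset.image f Finset.univ = Finset.image g Finset.univ → f = g := by
    intro f g hf hg h
    haveI : WellFoundedLT (Fin n) := inferInstance
    rw [← hf.range_inj hg]
    have h2 : (Finset.image f Finset.univ : Set ℕ) = (Finset.image g Finset.univ : Set ℕ) := by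
      rw [h]
    simpa [Finset.coe_image, Finset.coe_univ, Set.image_univ] using h2
  have hWsub : ∀ xy : (Fin n → ℕ) × (Fin n → ℕ), xy ∈ A →
      Finset.image xy.1 (Sel xy) ⊆ Finset.image xy.2 Finset.univ := by
    intro xy hxy v hv
    rw [Finset.mem_image] at hv
    obtain ⟨i, hi, rfl⟩ := hv
    rw [(hSel xy hxy.2.2).2 i hi]
    exact Finset.mem_image.2 ⟨i, Finset.mem_univ i, rfl⟩
  set T : Finset (Finset (Fin n) × Finset ℕ × Finset ℕ) :=
    ((Finset.univ : Finset (Fin n)).powersetCard k) ×ˢ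
      (((Finset.Icc 1 m).powersetCard n) ×ˢ ((Finset.Icc 1 m).powersetCard (n - k))) with hT
  have hmaps : ∀ xy : (Fin n → ℕ) × (Fin n → ℕ), xy ∈ A → F xy ∈ T := by
    intro xy hxy
    obtain ⟨⟨hx, hbx⟩, ⟨hy, hby⟩, hex⟩ := hxy
    rw [hT, Finset.mem_product, Finset.mem_product]
    refine ⟨?_, hrange _ hx hbx, ?_⟩
    · rw [Finset.mem_powersetCard]
      exact ⟨Finset.subset_univ _, (hSel xy hex).1⟩
    · rw [Finset.mem_powersetCard]
      constructor
      · intro v hv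
        have hv' := Finset.mem_sdiff.1 hv
        rw [Finset.mem_image] at hv'
        obtain ⟨⟨i, _, rfl⟩, _⟩ := hv'
        exact Finset.mem_Icc.2 (hby i)
      · rw [Finset.card_sdiff_of_subset (hWsub xy ⟨⟨hx, hbx⟩, ⟨hy, hby⟩, hex⟩)]
        rw [Finset.card_image_of_injective _ hx.injective, (hSel xy hex).1,
          Finset.card_image_of_injective _ hy.injective, Finset.card_univ, Fintype.card_fin]
  have hinj : Set.InjOn F A := by
    intro a ha b hb hab
    have h1 : Sel a = Sel b := congrArg Prod.fst hab
    have h2 : Finset.image a.1 Finset.univ = Finset.image b.1 Finset.univ :=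
      congrArg (fun p => p.2.1) hab
    have h3 : Finset.image a.2 Finset.univ \ Finset.image a.1 (Sel a)
        = Finset.image b.2 Finset.univ \ Finset.image b.1 (Sel b) :=
      congrArg (fun p => p.2.2) hab
    have hx : a.1 = b.1 := hEqOfImage _ _ ha.1.1 hb.1.1 h2
    have hW : Finset.image a.1 (Sel a) = Finset.image b.1 (Sel b) := by rw [hx, h1]
    have himy : Finset.image a.2 Finset.univ = Finset.image b.2 Finset.univ := by
      calc Finset.image a.2 Finset.univ
          = (Finset.image a.2 Finset.univ \ Finset.image a.1 (Sel a))
            ∪ Finset.image a.1 (Sel a) := (Finset.sdiff_union_of_subset (hWsub a ha)).symm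
        _ = (Finset.image b.2 Finset.univ \ Finset.image b.1 (Sel b))
            ∪ Finset.image b.1 (Sel b) := by rw [h3, hW]
        _ = Finset.image b.2 Finset.univ := Finset.sdiff_union_of_subset (hWsub b hb)
    have hy : a.2 = b.2 := hEqOfImage _ _ ha.2.1.1 hb.2.1.1 himy
    exact Prod.ext hx hy
  have hcard : A.ncard ≤ n.choose k * (m.choose n * m.choose (n - k)) := by
    have h1 : A.ncard = (F '' A).ncard := (Set.ncard_image_of_injOn hinj).symm
    have h2 : F '' A ⊆ ↑T := by
      rintro _ ⟨xy, hxy, rfl⟩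
      exact hmaps xy hxy
    have h3 : (F '' A).ncard ≤ (↑T : Set (Finset (Fin n) × Finset ℕ × Finset ℕ)).ncard :=
      Set.ncard_le_ncard h2 T.finite_toSet
    rw [Set.ncard_coe_finset] at h3
    have h4 : T.card = n.choose k * (m.choose n * m.choose (n - k)) := by
      rw [hT, Finset.card_product, Finset.card_product, Finset.card_powersetCard,
        Finset.card_powersetCard, Finset.card_powersetCard, Finset.card_univ,
        Fintype.card_fin, Nat.card_Icc]
      norm_num
    omega
  -- arithmetic part
  obtain ⟨d, hd⟩ : ∃ d, m = n + d := ⟨m - n, by omega⟩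
  have key : m ^ k * (Nat.factorial k * m.choose (n - k))
      ≤ n ^ k * (n.descFactorial k * m.choose n) := by
    subst hd
    calc (n + d) ^ k * (Nat.factorial k * (n + d).choose (n - k))
        = ((n + d) ^ k * Nat.factorial k) * (n + d).choose (n - k) := by ring
      _ ≤ (n ^ k * (d + k).descFactorial k) * (n + d).choose (n - k) :=
          Nat.mul_le_mul_right _ (aux_pow_fact n d k hkn)
      _ = ((n + d).choose (n - k) * (d + k).descFactorial k) * n ^ k := by ring
      _ = ((n + d).choose n * n.descFactorial k) * n ^ k := by rw [← aux_id n d k hkn]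
      _ = n ^ k * (n.descFactorial k * (n + d).choose n) := by ring
  rw [Nat.descFactorial_eq_factorial_mul_choose] at key
  have hC3 : (m.choose (n - k) : ℝ) ≤ ((n : ℝ) / m) ^ k * n.choose k * m.choose n := by
    have hcast : (m : ℝ) ^ k * (Nat.factorial k * m.choose (n - k))
        ≤ (n : ℝ) ^ k * (Nat.factorial k * n.choose k * m.choose n) := by
      exact_mod_cast key
    have hpos : (0 : ℝ) < (m : ℝ) ^ k * Nat.factorial k := by positivity
    rw [show ((n : ℝ) / m) ^ k * n.choose k * m.choose n
        = ((n : ℝ) ^ k * (Nat.factorial k * n.choose k * m.choose n))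
          / ((m : ℝ) ^ k * Nat.factorial k) by
      rw [div_pow]
      field_simp]
    rw [le_div_iff₀ hpos]
    calc (m.choose (n - k) : ℝ) * ((m : ℝ) ^ k * Nat.factorial k)
        = (m : ℝ) ^ k * (Nat.factorial k * m.choose (n - k)) := by ring
      _ ≤ _ := hcast
  have hc : (1024 : ℝ) ≤ 5 * Real.exp 1 * (5 * Real.exp 1 / 4) ^ 4 := by
    have he' : (2.7 : ℝ) ≤ Real.exp 1 := le_trans (by norm_num) Real.exp_one_gt_d9.le
    have h5p : (2.7 : ℝ) ^ 5 ≤ (Real.exp 1) ^ 5 := pow_le_pow_left₀ (by norm_num) he' 5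
    nlinarith [h5p]
  have hnm : (0 : ℝ) ≤ (n : ℝ) / m := by positivity
  have h2p : (n.choose k : ℝ) ≤ (2 : ℝ) ^ n := by exact_mod_cast aux_choose_le_two_pow n k
  have hpow : ((2 : ℝ) ^ n) ^ 2 = (1024 : ℝ) ^ k := by
    rw [← pow_mul, hk, show 5 * k * 2 = 10 * k by ring, pow_mul]
    norm_num
  calc (A.ncard : ℝ)
      ≤ ((n.choose k * (m.choose n * m.choose (n - k)) : ℕ) : ℝ) := by exact_mod_cast hcard
    _ = (n.choose k : ℝ) * m.choose n * m.choose (n - k) := by push_cast; ring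
    _ ≤ (n.choose k : ℝ) * m.choose n * (((n : ℝ) / m) ^ k * n.choose k * m.choose n) := by
        apply mul_le_mul_of_nonneg_left hC3 (by positivity)
    _ = ((n.choose k : ℝ)) ^ 2 * ((n : ℝ) / m) ^ k * (m.choose n : ℝ) ^ 2 := by ring
    _ ≤ ((2 : ℝ) ^ n) ^ 2 * ((n : ℝ) / m) ^ k * (m.choose n : ℝ) ^ 2 := by
        gcongr
    _ = (1024 : ℝ) ^ k * ((n : ℝ) / m) ^ k * (m.choose n : ℝ) ^ 2 := by rw [hpow]
    _ ≤ (5 * Real.exp 1 * (5 * Real.exp 1 / 4) ^ 4) ^ k * ((n : ℝ) / m) ^ k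
          * (m.choose n : ℝ) ^ 2 := by
        gcongr
    _ = (5 * Real.exp 1 * ((n : ℝ) / m) * (5 * Real.exp 1 / 4) ^ 4) ^ k
          * (m.choose n : ℝ) ^ 2 := by
        ring
end

section
/- For every n ≥ 32 divisible by 32, the number of sets A ⊆ {1, …, n} with |A| = n/2 and g(A) ≤ n/32 is at most (n/2) · 2^{7n/16}. -/
/-- `gInt A` is the minimum number of intervals of consecutive integers whose
union is `A`. -/
noncomputable def gInt (A : Finset ℕ) : ℕ :=
  sInf {k | ∃ I : Fin k → ℕ × ℕ,
    A = Finset.univ.biUnion fun t => Finset.Ico (I t).1 (I t).2}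

lemma gInt_mem (A : Finset ℕ) : ∃ I : Fin (gInt A) → ℕ × ℕ,
    A = Finset.univ.biUnion fun t => Finset.Ico (I t).1 (I t).2 := by
  have hne : {k | ∃ I : Fin k → ℕ × ℕ,
      A = Finset.univ.biUnion fun t => Finset.Ico (I t).1 (I t).2}.Nonempty := by
    refine ⟨A.card, fun t => (((A.equivFin.symm t : A) : ℕ),
      ((A.equivFin.symm t : A) : ℕ) + 1), ?_⟩
    ext x
    simp only [Finset.mem_biUnion, Finset.mem_univ, Finset.mem_Ico, true_and]
    constructor
    · intro hx
      refine ⟨A.equivFin ⟨x, hx⟩, ?_⟩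
      simp [Equiv.symm_apply_apply]
    · rintro ⟨t, h1, h2⟩
      have hx : x = ((A.equivFin.symm t : A) : ℕ) := by omega
      rw [hx]
      exact (A.equivFin.symm t).2
  exact Nat.sInf_mem hne

def bset (A : Finset ℕ) : Finset ℕ :=
  (A.filter (fun a => a - 1 ∉ A)) ∪ ((A.filter (fun a => a + 1 ∉ A)).image (· + 1))

lemma bset_card_le {A : Finset ℕ} {k : ℕ} {I : Fin k → ℕ × ℕ}
    (hA : A = Finset.univ.biUnion fun t => Finset.Ico (I t).1 (I t).2) :
    (bset A).card ≤ 2 * k := by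
  have hmem : ∀ x, x ∈ A ↔ ∃ t : Fin k, (I t).1 ≤ x ∧ x < (I t).2 := by
    intro x
    rw [hA]
    simp [Finset.mem_biUnion, Finset.mem_Ico]
  have hsub : bset A ⊆ (Finset.univ.image (fun t : Fin k => (I t).1)) ∪
      (Finset.univ.image (fun t : Fin k => (I t).2)) := by
    intro b hb
    simp only [bset, Finset.mem_union, Finset.mem_filter, Finset.mem_image,
      Finset.mem_univ, true_and]
    rcases Finset.mem_union.mp hb with hb' | hb'
    · obtain ⟨h1, h2⟩ := Finset.mem_filter.mp hb'
      obtain ⟨t, ht1, ht2⟩ := (hmem b).mp h1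
      left
      refine ⟨t, ?_⟩
      by_contra hne
      exact h2 ((hmem (b - 1)).mpr ⟨t, by omega, by omega⟩)
    · obtain ⟨a, ha, rfl⟩ := Finset.mem_image.mp hb'
      obtain ⟨h1, h2⟩ := Finset.mem_filter.mp ha
      obtain ⟨t, ht1, ht2⟩ := (hmem a).mp h1
      right
      refine ⟨t, ?_⟩
      by_contra hne
      exact h2 ((hmem (a + 1)).mpr ⟨t, by omega, by omega⟩)
  calc (bset A).card ≤ _ := Finset.card_le_card hsub
    _ ≤ (Finset.univ.image (fun t : Fin k => (I t).1)).card
        + (Finset.univ.image (fun t : Fin k => (I t).2)).card := Finset.card_union_le _ _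
    _ ≤ k + k := by
        gcongr <;> exact (Finset.card_image_le.trans (by simp))
    _ = 2 * k := by omega

lemma bset_subset {A : Finset ℕ} {n : ℕ} (h : A ⊆ Finset.Icc 1 n) :
    bset A ⊆ Finset.Icc 1 (n + 1) := by
  intro b hb
  simp only [bset, Finset.mem_union, Finset.mem_filter, Finset.mem_image] at hb
  simp only [Finset.mem_Icc]
  rcases hb with ⟨h1, _⟩ | ⟨a, ⟨h1, _⟩, rfl⟩
  · have := h h1; simp only [Finset.mem_Icc] at this; omega
  · have := h h1; simp only [Finset.mem_Icc] at this; omega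

lemma choose_mono_right (N : ℕ) {j : ℕ} (hj : j ≤ N / 2) :
    ∀ i ≤ j, N.choose i ≤ N.choose j := by
  induction j with
  | zero => intro i hi; simp_all
  | succ j ih =>
    intro i hi
    rcases Nat.eq_or_lt_of_le hi with rfl | h
    · exact le_refl _
    · exact (ih (by omega) i (by omega)).trans
        (Nat.choose_le_succ_of_lt_half_left (by omega))

lemma choose_mul_le (a b : ℕ) :
    (a + b).choose a * (a ^ a * b ^ b) ≤ (a + b) ^ (a + b) := by
  rw [add_pow]
  have h : a ∈ Finset.range (a + b + 1) := by simp
  have := Finset.single_le_sum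
    (f := fun i => a ^ i * b ^ (a + b - i) * (a + b).choose i)
    (fun i _ => Nat.zero_le _) h
  calc (a + b).choose a * (a ^ a * b ^ b)
      = a ^ a * b ^ (a + b - a) * (a + b).choose a := by
        rw [Nat.add_sub_cancel_left]; ring
    _ ≤ _ := this

lemma key_numeric : (33:ℕ)^33 ≤ 65536 * 31^31 := by norm_num

lemma choose_bound {m : ℕ} (hm : 1 ≤ m) : (33*m).choose (2*m) ≤ 2 ^ (14*m) := by
  have hpos : 0 < (2*m)^(2*m) * (31*m)^(31*m) := by positivity
  refine Nat.le_of_mul_le_mul_right ?_ hpos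
  have h1 : (33*m).choose (2*m) * ((2*m)^(2*m) * (31*m)^(31*m)) ≤ (33*m)^(33*m) := by
    have h := choose_mul_le (2*m) (31*m)
    have he : 2*m + 31*m = 33*m := by ring
    rw [he] at h
    exact h
  refine h1.trans ?_
  have h2 : (33:ℕ)^(33*m) ≤ (2^16)^m * 31^(31*m) := by
    calc (33:ℕ)^(33*m) = (33^33)^m := by rw [← pow_mul]
      _ ≤ (65536*31^31)^m := Nat.pow_le_pow_left key_numeric m
      _ = (2^16)^m * 31^(31*m) := by rw [mul_pow, ← pow_mul]; norm_num
  have e1 : ((2:ℕ)^16)^m = 2^(14*m) * 2^(2*m) := by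
    rw [← pow_mul, ← pow_add]; congr 1; omega
  have e2 : (m:ℕ)^(33*m) = m^(2*m) * m^(31*m) := by
    rw [← pow_add]; congr 1; omega
  calc (33*m)^(33*m) = 33^(33*m) * m^(33*m) := mul_pow 33 m (33*m)
    _ ≤ ((2^16)^m * 31^(31*m)) * m^(33*m) := Nat.mul_le_mul_right _ h2
    _ = 2^(14*m) * ((2*m)^(2*m) * (31*m)^(31*m)) := by
        rw [e1, e2, mul_pow, mul_pow]; ring


lemma mem_bset_succ (A : Finset ℕ) (x : ℕ) :
    x + 1 ∈ bset A ↔ (x + 1 ∈ A ∧ x ∉ A) ∨ (x ∈ A ∧ x + 1 ∉ A) := by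
  simp only [bset, Finset.mem_union, Finset.mem_filter, Finset.mem_image]
  constructor
  · rintro (⟨h1, h2⟩ | ⟨a, ⟨h1, h2⟩, h3⟩)
    · left; exact ⟨h1, by simpa using h2⟩
    · right; obtain rfl : a = x := by omega
      exact ⟨h1, h2⟩
  · rintro (⟨h1, h2⟩ | ⟨h1, h2⟩)
    · left; exact ⟨h1, by simpa using h2⟩
    · right; exact ⟨x, ⟨h1, h2⟩, rfl⟩

lemma mem_iff_odd_bset (A : Finset ℕ) (h0 : 0 ∉ A) (x : ℕ) :
    x ∈ A ↔ ((bset A).filter (· ≤ x)).card % 2 = 1 := by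
  induction x with
  | zero =>
    have he : (bset A).filter (· ≤ 0) = ∅ := by
      apply Finset.filter_eq_empty_iff.mpr
      intro b hb hb0
      obtain rfl : b = 0 := Nat.le_zero.mp hb0
      simp only [bset, Finset.mem_union, Finset.mem_filter, Finset.mem_image] at hb
      rcases hb with ⟨h1, _⟩ | ⟨a, _, h⟩
      · exact h0 h1
      · omega
    rw [he]
    simp [h0]
  | succ x ih =>
    have hsplit : (bset A).filter (· ≤ x + 1)
        = ((bset A).filter (· ≤ x)) ∪ ((bset A).filter (· = x + 1)) := by
      rw [← Finset.filter_or]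
      apply Finset.filter_congr
      intro b _
      constructor <;> intro h <;> omega
    have hdisj : Disjoint ((bset A).filter (· ≤ x)) ((bset A).filter (· = x + 1)) := by
      rw [Finset.disjoint_left]
      intro b hb hb'
      simp only [Finset.mem_filter] at hb hb'
      omega
    have hcard : ((bset A).filter (· ≤ x + 1)).card
        = ((bset A).filter (· ≤ x)).card + (if x + 1 ∈ bset A then 1 else 0) := by
      rw [hsplit, Finset.card_union_of_disjoint hdisj, Finset.filter_eq']
      split <;> simp
    rw [hcard]
    by_cases h1 : x ∈ A <;> by_cases h2 : x + 1 ∈ A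
    · have hb : x + 1 ∉ bset A := by rw [mem_bset_succ A x]; tauto
      rw [if_neg hb, Nat.add_zero]
      exact iff_of_true h2 (ih.mp h1)
    · have hb : x + 1 ∈ bset A := by rw [mem_bset_succ A x]; tauto
      rw [if_pos hb]
      exact iff_of_false h2 (by have := ih.mp h1; omega)
    · have hb : x + 1 ∈ bset A := by rw [mem_bset_succ A x]; tauto
      rw [if_pos hb]
      refine iff_of_true h2 ?_
      have : ¬ (((bset A).filter (· ≤ x)).card % 2 = 1) := fun h => h1 (ih.mpr h)
      omega
    · have hb : x + 1 ∉ bset A := by rw [mem_bset_succ A x]; tauto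
      rw [if_neg hb, Nat.add_zero]
      exact iff_of_false h2 (fun h => h1 (ih.mpr h))

/-- Counting estimate in the proof of Claim 4.2: for `32 ∣ n`, `n ≥ 32`, the
number of sets `A ⊆ {1,…,n}` with `|A| = n/2` and `g(A) ≤ n/32` is at most
`(n/2) · 2^{7n/16}`. -/
theorem stmt10 (n : ℕ) (hn : 32 ≤ n) (h32 : 32 ∣ n) :
    Set.ncard {A : Finset ℕ | A ⊆ Finset.Icc 1 n ∧ A.card = n / 2 ∧
        gInt A ≤ n / 32} ≤
      (n / 2) * 2 ^ (7 * n / 16) := by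
  obtain ⟨m, rfl⟩ := h32
  have hm : 1 ≤ m := by omega
  have e1 : 32 * m / 2 = 16 * m := by omega
  have e2 : 32 * m / 32 = m := by omega
  have e3 : 7 * (32 * m) / 16 = 14 * m := by omega
  simp only [e1, e2, e3]
  set S : Set (Finset ℕ) := {A : Finset ℕ | A ⊆ Finset.Icc 1 (32 * m) ∧
      A.card = 16 * m ∧ gInt A ≤ m} with hS
  set T : Finset (Finset ℕ) :=
    (Finset.Icc 1 (32 * m + 1)).powerset.filter (fun B => B.card ≤ 2 * m) with hT
  have hinj : Set.InjOn bset S := by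
    intro A hA A' hA' hEq
    have h0 : 0 ∉ A := fun h => by
      have := hA.1 h; simp only [Finset.mem_Icc] at this; omega
    have h0' : 0 ∉ A' := fun h => by
      have := hA'.1 h; simp only [Finset.mem_Icc] at this; omega
    ext x
    rw [mem_iff_odd_bset A h0 x, mem_iff_odd_bset A' h0' x, hEq]
  have himg : bset '' S ⊆ ↑T := by
    rintro _ ⟨A, ⟨hsub, hcard, hg⟩, rfl⟩
    simp only [hT, Finset.coe_filter, Finset.mem_powerset, Set.mem_setOf_eq]
    refine ⟨bset_subset hsub, ?_⟩
    obtain ⟨I, hI⟩ := gInt_mem A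
    calc (bset A).card ≤ 2 * gInt A := bset_card_le hI
      _ ≤ 2 * m := by omega
  have hstep1 : S.ncard ≤ T.card := by
    calc S.ncard = (bset '' S).ncard := (Set.ncard_image_of_injOn hinj).symm
      _ ≤ (↑T : Set (Finset ℕ)).ncard := Set.ncard_le_ncard himg T.finite_toSet
      _ = T.card := Set.ncard_coe_finset T
  have hstep2 : T.card ≤ ∑ i ∈ Finset.range (2 * m + 1), (32 * m + 1).choose i := by
    have hsub : T ⊆ (Finset.range (2 * m + 1)).biUnion
        (fun i => (Finset.Icc 1 (32 * m + 1)).powersetCard i) := by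
      intro B hB
      simp only [hT, Finset.mem_filter, Finset.mem_powerset] at hB
      refine Finset.mem_biUnion.mpr ⟨B.card, Finset.mem_range.mpr (by omega), ?_⟩
      exact Finset.mem_powersetCard.mpr ⟨hB.1, rfl⟩
    calc T.card ≤ _ := Finset.card_le_card hsub
      _ ≤ ∑ i ∈ Finset.range (2 * m + 1),
          ((Finset.Icc 1 (32 * m + 1)).powersetCard i).card := Finset.card_biUnion_le
      _ = ∑ i ∈ Finset.range (2 * m + 1), (32 * m + 1).choose i := by
          refine Finset.sum_congr rfl (fun i _ => ?_)
          rw [Finset.card_powersetCard, Nat.card_Icc]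
          congr 1
  have hstep3 : ∑ i ∈ Finset.range (2 * m + 1), (32 * m + 1).choose i
      ≤ (2 * m + 1) * (32 * m + 1).choose (2 * m) := by
    calc _ ≤ ∑ _i ∈ Finset.range (2 * m + 1), (32 * m + 1).choose (2 * m) := by
          refine Finset.sum_le_sum (fun i hi => ?_)
          exact choose_mono_right (32 * m + 1) (by omega) i
            (by have := Finset.mem_range.mp hi; omega)
      _ = (2 * m + 1) * (32 * m + 1).choose (2 * m) := by
          rw [Finset.sum_const, Finset.card_range, smul_eq_mul]
  have hstep4 : (32 * m + 1).choose (2 * m) ≤ 2 ^ (14 * m) :=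
    (Nat.choose_le_choose (2 * m) (by omega : 32 * m + 1 ≤ 33 * m)).trans (choose_bound hm)
  calc S.ncard ≤ (2 * m + 1) * (32 * m + 1).choose (2 * m) :=
        hstep1.trans (hstep2.trans hstep3)
    _ ≤ (16 * m) * 2 ^ (14 * m) :=
        Nat.mul_le_mul (by omega) hstep4
end
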